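/- Let A be a commutative associative algebra over ℂ equipped with a symmetric bilinear form ⟨·,·⟩ satisfying ⟨ab,c⟩ = ⟨a,bc⟩ for all a,b,c ∈ A. Then the space L(A) = (A ⊗ ℂ[t,t⁻¹]) ⊕ ℂK, with the bilinear bracket determined by [a⊗tᵐ, b⊗tⁿ] = ½(m−n)(ab)⊗t^{m+n−1} + C(m,3)⟨a,b⟩δ_{m+n,2}K and [K, x] = [x, K] = 0 for all x ∈ L(A), is a Lie algebra over ℂ (the bracket is alternating and satisfies the Jacobi identity). -/

import Mathlib

/-- The bracket `[a⊗tᵐ, b⊗tⁿ] = ½(m−n)(ab)⊗t^{m+n−1} + C(m,3)⟨a,b⟩δ_{m+n,2}K`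
on generators, valued in `L(A) = (A ⊗ ℂ[t,t⁻¹]) ⊕ ℂK`, where `A ⊗ ℂ[t,t⁻¹]` is
modeled as `ℤ →₀ A` (with `a⊗tᵐ = Finsupp.single m a`) and the `ℂK` component is
the second coordinate. -/
noncomputable def brGen {A : Type*} [AddCommGroup A] [Module ℂ A]
    (mul : A →ₗ[ℂ] A →ₗ[ℂ] A) (form : A →ₗ[ℂ] A →ₗ[ℂ] ℂ)
    (m : ℤ) (a : A) (n : ℤ) (b : A) : (ℤ →₀ A) × ℂ :=
  ((((m - n : ℤ) : ℂ) / 2) • Finsupp.single (m + n - 1) (mul a b),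
   if m + n = 2 then ((m : ℂ) * ((m : ℂ) - 1) * ((m : ℂ) - 2) / 6) * form a b else 0)

/-- The bracket on all of `L(A) = (A ⊗ ℂ[t,t⁻¹]) ⊕ ℂK`, extending `brGen` with `K`
central (the `ℂK` components of the arguments bracket to zero with everything). -/
noncomputable def br {A : Type*} [AddCommGroup A] [Module ℂ A]
    (mul : A →ₗ[ℂ] A →ₗ[ℂ] A) (form : A →ₗ[ℂ] A →ₗ[ℂ] ℂ)
    (x y : (ℤ →₀ A) × ℂ) : (ℤ →₀ A) × ℂ :=
  x.1.sum fun m a => y.1.sum fun n b => brGen mul form m a n b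

section Aux

variable {A : Type*} [AddCommGroup A] [Module ℂ A]
  (mul : A →ₗ[ℂ] A →ₗ[ℂ] A) (form : A →ₗ[ℂ] A →ₗ[ℂ] ℂ)

lemma brGen_zero_left (m n : ℤ) (b : A) : brGen mul form m 0 n b = 0 := by
  simp [brGen, Prod.ext_iff]

lemma brGen_zero_right (m n : ℤ) (a : A) : brGen mul form m a n 0 = 0 := by
  simp [brGen, Prod.ext_iff]

lemma brGen_add_left (m n : ℤ) (a a' b : A) :
    brGen mul form m (a + a') n b = brGen mul form m a n b + brGen mul form m a' n b := by
  simp [brGen, Prod.ext_iff, Finsupp.single_add, smul_add, mul_add]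
  split <;> ring

lemma brGen_add_right (m n : ℤ) (a b b' : A) :
    brGen mul form m a n (b + b') = brGen mul form m a n b + brGen mul form m a n b' := by
  simp [brGen, Prod.ext_iff, Finsupp.single_add, smul_add, mul_add]
  split <;> ring

lemma brGen_smul_left (c : ℂ) (m n : ℤ) (a b : A) :
    brGen mul form m (c • a) n b = c • brGen mul form m a n b := by
  simp [brGen, Prod.ext_iff, Finsupp.smul_single, smul_smul]
  constructor
  · congr 1; ring
  · split <;> ring

lemma brGen_smul_right (c : ℂ) (m n : ℤ) (a b : A) :
    brGen mul form m a n (c • b) = c • brGen mul form m a n b := by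
  simp [brGen, Prod.ext_iff, Finsupp.smul_single, smul_smul]
  constructor
  · congr 1; ring
  · split <;> ring

lemma br_add_left (x y z : (ℤ →₀ A) × ℂ) :
    br mul form (x + y) z = br mul form x z + br mul form y z := by
  show ((x.1 + y.1).sum fun m a => z.1.sum fun n b => brGen mul form m a n b) = _
  rw [Finsupp.sum_add_index']
  · rfl
  · intro m; simp [brGen_zero_left]
  · intro m a a'
    rw [← Finsupp.sum_add]
    exact Finsupp.sum_congr fun n _ => brGen_add_left mul form m n a a' _

lemma br_add_right (x y z : (ℤ →₀ A) × ℂ) :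
    br mul form x (y + z) = br mul form x y + br mul form x z := by
  show (x.1.sum fun m a => (y.1 + z.1).sum fun n b => brGen mul form m a n b) = _
  refine Eq.trans (Finsupp.sum_congr fun m _ => Finsupp.sum_add_index'
    (fun n => brGen_zero_right mul form m n _)
    (fun n b b' => brGen_add_right mul form m n _ b b')) Finsupp.sum_add

lemma br_smul_left (c : ℂ) (x y : (ℤ →₀ A) × ℂ) :
    br mul form (c • x) y = c • br mul form x y := by
  conv_rhs => rw [br, Finsupp.smul_sum]
  show ((c • x.1).sum fun m a => y.1.sum fun n b => brGen mul form m a n b) = _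
  rw [Finsupp.sum_smul_index' (h0 := by intro m; simp [brGen_zero_left])]
  refine Finsupp.sum_congr fun m _ => ?_
  rw [Finsupp.smul_sum]
  exact Finsupp.sum_congr fun n _ => brGen_smul_left mul form c m n _ _

lemma br_smul_right (c : ℂ) (x y : (ℤ →₀ A) × ℂ) :
    br mul form x (c • y) = c • br mul form x y := by
  conv_rhs => rw [br, Finsupp.smul_sum]
  show (x.1.sum fun m a => (c • y.1).sum fun n b => brGen mul form m a n b) = _
  refine Finsupp.sum_congr fun m _ => ?_
  rw [Finsupp.sum_smul_index' (h0 := by intro n; simp [brGen_zero_right]),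
    Finsupp.smul_sum]
  exact Finsupp.sum_congr fun n _ => brGen_smul_right mul form c m n _ _

lemma br_single (m n : ℤ) (a b : A) (s t : ℂ) :
    br mul form (Finsupp.single m a, s) (Finsupp.single n b, t) = brGen mul form m a n b := by
  rw [br]
  simp only
  rw [Finsupp.sum_single_index (by simp [brGen_zero_left, Finsupp.sum_fun_zero]),
    Finsupp.sum_single_index (brGen_zero_right mul form m n a)]

lemma brGen_skew (hcomm : ∀ a b : A, mul a b = mul b a)
    (hsymm : ∀ a b : A, form a b = form b a) (m n : ℤ) (a b : A) :
    brGen mul form m a n b = - brGen mul form n b m a := by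
  simp only [brGen, Prod.neg_mk, Prod.mk.injEq]
  constructor
  · rw [hcomm b a, show n + m - 1 = m + n - 1 from by omega, ← neg_smul]
    congr 1
    push_cast; ring
  · rw [hsymm b a]
    by_cases h : m + n = 2
    · rw [if_pos h, if_pos (by omega)]
      have hc : (n : ℂ) = 2 - m := by
        have := congrArg (fun k : ℤ => (k : ℂ)) h
        push_cast at this
        linear_combination this
      rw [hc]; ring
    · rw [if_neg h, if_neg (by omega), neg_zero]

lemma br_skew (hcomm : ∀ a b : A, mul a b = mul b a)
    (hsymm : ∀ a b : A, form a b = form b a) (x y : (ℤ →₀ A) × ℂ) :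
    br mul form x y = - br mul form y x := by
  rw [br, br]
  calc (x.1.sum fun m a => y.1.sum fun n b => brGen mul form m a n b)
      = x.1.sum fun m a => y.1.sum fun n b => - brGen mul form n b m a :=
        Finsupp.sum_congr fun m _ => Finsupp.sum_congr fun n _ =>
          brGen_skew mul form hcomm hsymm _ _ _ _
    _ = - x.1.sum fun m a => y.1.sum fun n b => brGen mul form n b m a := by
        simp [Finsupp.sum, Finset.sum_neg_distrib]
    _ = - y.1.sum fun n b => x.1.sum fun m a => brGen mul form n b m a := by
        rw [Finsupp.sum_comm]

lemma br_fzero_left (y : (ℤ →₀ A) × ℂ) (u : ℂ) :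
    br mul form ((0 : ℤ →₀ A), u) y = 0 := by
  rw [br]; exact Finsupp.sum_zero_index

lemma br_fzero_right (x : (ℤ →₀ A) × ℂ) (u : ℂ) :
    br mul form x ((0 : ℤ →₀ A), u) = 0 := by
  rw [br]; simp [Finsupp.sum_zero_index, Finsupp.sum_fun_zero]

lemma br_zero_left (y : (ℤ →₀ A) × ℂ) : br mul form 0 y = 0 :=
  br_fzero_left mul form y 0

lemma br_zero_right (x : (ℤ →₀ A) × ℂ) : br mul form x 0 = 0 :=
  br_fzero_right mul form x 0

lemma br_gen_gen (m n p : ℤ) (a b c : A) (u : ℂ) :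
    br mul form (brGen mul form m a n b) (Finsupp.single p c, u)
      = (((m - n : ℤ) : ℂ) / 2) • brGen mul form (m + n - 1) (mul a b) p c := by
  rw [br,
    show (brGen mul form m a n b).1
        = Finsupp.single (m + n - 1) ((((m - n : ℤ) : ℂ) / 2) • mul a b) from
      Finsupp.smul_single _ _ _]
  simp only
  rw [Finsupp.sum_single_index (by simp [brGen_zero_left, Finsupp.sum_fun_zero]),
    Finsupp.sum_single_index (brGen_zero_right mul form _ p _),
    brGen_smul_left]

lemma jac_single (hcomm : ∀ a b : A, mul a b = mul b a)
    (hassoc : ∀ a b c : A, mul (mul a b) c = mul a (mul b c))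
    (hsymm : ∀ a b : A, form a b = form b a)
    (hform : ∀ a b c : A, form (mul a b) c = form a (mul b c))
    (m n p : ℤ) (a b c : A) (s t u : ℂ) :
    br mul form (br mul form (Finsupp.single m a, s) (Finsupp.single n b, t)) (Finsupp.single p c, u)
    + br mul form (br mul form (Finsupp.single n b, t) (Finsupp.single p c, u)) (Finsupp.single m a, s)
    + br mul form (br mul form (Finsupp.single p c, u) (Finsupp.single m a, s)) (Finsupp.single n b, t)
      = 0 := by
  rw [br_single, br_single, br_single, br_gen_gen, br_gen_gen, br_gen_gen]
  have e1 : mul (mul b c) a = mul (mul a b) c := by rw [hcomm (mul b c) a, ← hassoc]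
  have e2 : mul (mul c a) b = mul (mul a b) c := by rw [hassoc c a b, hcomm c (mul a b)]
  have f1 : form (mul b c) a = form (mul a b) c := by rw [hsymm (mul b c) a, ← hform]
  have f2 : form (mul c a) b = form (mul a b) c := by rw [hform c a b, hsymm c (mul a b)]
  simp only [brGen, e1, e2, f1, f2, Prod.smul_mk, Prod.mk_add_mk, Prod.mk_eq_zero]
  constructor
  · rw [show n + p - 1 + m - 1 = m + n - 1 + p - 1 from by omega,
      show p + m - 1 + n - 1 = m + n - 1 + p - 1 from by omega,
      smul_smul, smul_smul, smul_smul, ← add_smul, ← add_smul,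
      show ((m - n : ℤ) : ℂ) / 2 * (((m + n - 1 - p : ℤ) : ℂ) / 2)
          + ((n - p : ℤ) : ℂ) / 2 * (((n + p - 1 - m : ℤ) : ℂ) / 2)
          + ((p - m : ℤ) : ℂ) / 2 * (((p + m - 1 - n : ℤ) : ℂ) / 2) = 0 from by
        push_cast; ring,
      zero_smul]
  · by_cases hmp : m + n + p = 3
    · rw [if_pos (by omega), if_pos (by omega), if_pos (by omega)]
      have hp : (p : ℂ) = 3 - m - n := by
        have := congrArg (fun k : ℤ => (k : ℂ)) hmp
        push_cast at this
        linear_combination this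
      push_cast
      rw [hp]
      simp only [smul_eq_mul]
      ring
    · rw [if_neg (by omega), if_neg (by omega), if_neg (by omega)]
      simp

lemma jac3 (hcomm : ∀ a b : A, mul a b = mul b a)
    (hassoc : ∀ a b c : A, mul (mul a b) c = mul a (mul b c))
    (hsymm : ∀ a b : A, form a b = form b a)
    (hform : ∀ a b c : A, form (mul a b) c = form a (mul b c))
    (m n : ℤ) (a b : A) (h : ℤ →₀ A) :
    br mul form (br mul form (Finsupp.single m a, 0) (Finsupp.single n b, 0)) (h, 0)
    + br mul form (br mul form (Finsupp.single n b, 0) (h, (0:ℂ))) (Finsupp.single m a, 0)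
    + br mul form (br mul form (h, (0:ℂ)) (Finsupp.single m a, 0)) (Finsupp.single n b, 0)
      = 0 := by
  induction h using Finsupp.induction_linear with
  | zero => simp [br_fzero_left, br_fzero_right, br_zero_left, br_zero_right]
  | add h1 h2 ih1 ih2 =>
    rw [show ((h1 + h2 : ℤ →₀ A), (0:ℂ)) = ((h1, 0) + (h2, 0) : (ℤ →₀ A) × ℂ) from by
      simp [Prod.mk_add_mk]]
    simp only [br_add_left, br_add_right]
    have h12 := congrArg₂ (· + ·) ih1 ih2
    simp only [add_zero] at h12
    rw [← h12]
    abel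
  | single p c => exact jac_single mul form hcomm hassoc hsymm hform m n p a b c 0 0 0

lemma jac2 (hcomm : ∀ a b : A, mul a b = mul b a)
    (hassoc : ∀ a b c : A, mul (mul a b) c = mul a (mul b c))
    (hsymm : ∀ a b : A, form a b = form b a)
    (hform : ∀ a b c : A, form (mul a b) c = form a (mul b c))
    (m : ℤ) (a : A) (g h : ℤ →₀ A) :
    br mul form (br mul form (Finsupp.single m a, 0) (g, (0:ℂ))) (h, 0)
    + br mul form (br mul form (g, (0:ℂ)) (h, (0:ℂ))) (Finsupp.single m a, 0)
    + br mul form (br mul form (h, (0:ℂ)) (Finsupp.single m a, 0)) (g, (0:ℂ))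
      = 0 := by
  induction g using Finsupp.induction_linear with
  | zero => simp [br_fzero_left, br_fzero_right, br_zero_left, br_zero_right]
  | add g1 g2 ih1 ih2 =>
    rw [show ((g1 + g2 : ℤ →₀ A), (0:ℂ)) = ((g1, 0) + (g2, 0) : (ℤ →₀ A) × ℂ) from by
      simp [Prod.mk_add_mk]]
    simp only [br_add_left, br_add_right]
    have h12 := congrArg₂ (· + ·) ih1 ih2
    simp only [add_zero] at h12
    rw [← h12]
    abel
  | single n b => exact jac3 mul form hcomm hassoc hsymm hform m n a b h

lemma jac1 (hcomm : ∀ a b : A, mul a b = mul b a)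
    (hassoc : ∀ a b c : A, mul (mul a b) c = mul a (mul b c))
    (hsymm : ∀ a b : A, form a b = form b a)
    (hform : ∀ a b c : A, form (mul a b) c = form a (mul b c))
    (f g h : ℤ →₀ A) :
    br mul form (br mul form (f, (0:ℂ)) (g, (0:ℂ))) (h, 0)
    + br mul form (br mul form (g, (0:ℂ)) (h, (0:ℂ))) (f, (0:ℂ))
    + br mul form (br mul form (h, (0:ℂ)) (f, (0:ℂ))) (g, (0:ℂ))
      = 0 := by
  induction f using Finsupp.induction_linear with
  | zero => simp [br_fzero_left, br_fzero_right, br_zero_left, br_zero_right]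
  | add f1 f2 ih1 ih2 =>
    rw [show ((f1 + f2 : ℤ →₀ A), (0:ℂ)) = ((f1, 0) + (f2, 0) : (ℤ →₀ A) × ℂ) from by
      simp [Prod.mk_add_mk]]
    simp only [br_add_left, br_add_right]
    have h12 := congrArg₂ (· + ·) ih1 ih2
    simp only [add_zero] at h12
    rw [← h12]
    abel
  | single m a => exact jac2 mul form hcomm hassoc hsymm hform m a g h

end Aux

/-- If `A` is a commutative associative ℂ-algebra with a symmetric associative bilinear
form, then `L(A)` with the bracket `br` is a Lie algebra over ℂ: the bracket is
bilinear, alternating, and satisfies the Jacobi identity. -/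
theorem LA_is_LieAlgebra {A : Type*} [AddCommGroup A] [Module ℂ A]
    (mul : A →ₗ[ℂ] A →ₗ[ℂ] A) (form : A →ₗ[ℂ] A →ₗ[ℂ] ℂ)
    (hcomm : ∀ a b : A, mul a b = mul b a)
    (hassoc : ∀ a b c : A, mul (mul a b) c = mul a (mul b c))
    (hsymm : ∀ a b : A, form a b = form b a)
    (hform : ∀ a b c : A, form (mul a b) c = form a (mul b c)) :
    (∀ x y z : (ℤ →₀ A) × ℂ,
        br mul form (x + y) z = br mul form x z + br mul form y z)
    ∧ (∀ x y z : (ℤ →₀ A) × ℂ,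
        br mul form x (y + z) = br mul form x y + br mul form x z)
    ∧ (∀ (c : ℂ) (x y : (ℤ →₀ A) × ℂ),
        br mul form (c • x) y = c • br mul form x y)
    ∧ (∀ (c : ℂ) (x y : (ℤ →₀ A) × ℂ),
        br mul form x (c • y) = c • br mul form x y)
    ∧ (∀ x : (ℤ →₀ A) × ℂ, br mul form x x = 0)
    ∧ (∀ x y z : (ℤ →₀ A) × ℂ,
        br mul form (br mul form x y) z + br mul form (br mul form y z) x
          + br mul form (br mul form z x) y = 0) := by
  refine ⟨fun x y z => br_add_left mul form x y z,
    fun x y z => br_add_right mul form x y z,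
    fun c x y => br_smul_left mul form c x y,
    fun c x y => br_smul_right mul form c x y,
    fun x => ?_, fun x y z => ?_⟩
  · have h := br_skew mul form hcomm hsymm x x
    have h2 : br mul form x x + br mul form x x = 0 := by
      nth_rewrite 1 [h]; exact neg_add_cancel _
    calc br mul form x x = (2⁻¹ : ℂ) • ((2 : ℂ) • br mul form x x) := by
          rw [smul_smul, show ((2⁻¹ : ℂ) * 2) = 1 from by norm_num, one_smul]
      _ = 0 := by rw [two_smul, h2, smul_zero]
  · exact jac1 mul form hcomm hassoc hsymm hform x.1 y.1 z.1
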